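/- In the on-chain-verified audit game, assume S_a > ((1 − p_a)/p_a)·R_a. Then in every pure Nash equilibrium σ, every non-storing SP receives no ✓ deterministic reports: for all distinct i, j with s_j = 0, the deterministic report satisfies r_i^j = 0; consequently (since N ≥ 3 and |{k ≠ j : r_k^j = 1}| = 0 ≤ N/2) no non-storing SP receives the storage reward R_s. -/

import Mathlib

/-!
On-chain-verified audit game: `N ≥ 3` storage providers (SPs), parameters
`R_s > 0` (storage reward), `R_a > 0` (per-audit reward), `c_s > 0` (storage cost),
`c_a > 0` (audit cost), `S_a ≥ 0` (slashing penalty), `p_a ∈ (0,1]` (inspection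
probability), `ε ∈ (0,1)` (noise). A pure strategy of SP `i` is a triple `(s, a, ρ)`:
a storage bit, audit bits for each other SP, and reporting policies `ρ j : Bool → Bool`
(report as a function of having received a valid proof).
-/

open Finset

/-- A pure strategy of storage provider `i` in the on-chain-verified audit game. -/
structure Strat (N : ℕ) (i : Fin N) where
  /-- whether `i` stores its assigned data -/
  s : Bool
  /-- whether `i` audits SP `j` (at cost `c_a`) -/
  a : {j : Fin N // j ≠ i} → Bool
  /-- `i`'s reporting policy about `j`, as a function of whether a valid proof was received -/
  ρ : {j : Fin N // j ≠ i} → Bool → Bool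

/-- Numerical value of a Boolean choice. -/
def b01 (b : Bool) : ℝ := if b then 1 else 0

/-- Expected audit payoff of the auditor from one ordered pair `(i,j)`, where `sj` is the
auditee's storage bit, `a` the auditor's audit bit, and `ρ` the auditor's reporting policy.
The backing probability is `β = 1 − ε` if the auditee stores and `0` otherwise; an unbacked
✓ report earns `(1 − p_a)·R_a − p_a·S_a` in expectation. -/
noncomputable def pairPayoff (Ra ca Sa pa ε : ℝ) (sj a : Bool) (ρ : Bool → Bool) : ℝ :=
  let β : ℝ := if sj then 1 - ε else 0
  let F : ℝ := (1 - pa) * Ra - pa * Sa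
  if a then β * b01 (ρ true) * Ra + (1 - β) * b01 (ρ false) * F - ca
  else b01 (ρ false) * (β * Ra + (1 - β) * F)

/-- The deterministic report of `i` about `j`: `r_i^j = ρ_i^j (a_i^j · s_j)`. -/
def report {N : ℕ} (σ : ∀ i : Fin N, Strat N i) (i : Fin N) (j : {j : Fin N // j ≠ i}) : Bool :=
  (σ i).ρ j ((σ i).a j && (σ j.1).s)

/-- Number of SPs `j ≠ i` whose deterministic report about `i` is ✓. -/
def trueReports {N : ℕ} (σ : ∀ i : Fin N, Strat N i) (i : Fin N) : ℕ :=
  (univ.filter fun j : {j : Fin N // j ≠ i} => report σ j.1 ⟨i, Ne.symm j.2⟩ = true).card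

/-- Total (expected) utility of SP `i`:
`u_i(σ) = R_s·1[|{j ≠ i : r_j^i = 1}| > N/2] − c_s·s_i + Σ_{j≠i} pairPayoff(i,j)`. -/
noncomputable def U {N : ℕ} (Rs Ra cs ca Sa pa ε : ℝ) (σ : ∀ i : Fin N, Strat N i)
    (i : Fin N) : ℝ :=
  Rs * (if (N : ℝ) / 2 < (trueReports σ i : ℝ) then 1 else 0)
    - cs * b01 (σ i).s
    + ∑ j : {j : Fin N // j ≠ i}, pairPayoff Ra ca Sa pa ε (σ j.1).s ((σ i).a j) ((σ i).ρ j)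

/-- Pure Nash equilibrium: no SP can strictly increase its own utility by unilaterally
changing its strategy. -/
def IsNashEq {N : ℕ} (Rs Ra cs ca Sa pa ε : ℝ) (σ : ∀ i : Fin N, Strat N i) : Prop :=
  ∀ (i : Fin N) (τ : Strat N i),
    U Rs Ra cs ca Sa pa ε (Function.update σ i τ) i ≤ U Rs Ra cs ca Sa pa ε σ i

/-- The honest strategy profile: store, audit everyone, report ✓ iff a valid proof
was received. -/
def honest (N : ℕ) : ∀ i : Fin N, Strat N i :=
  fun _ => ⟨true, fun _ => true, fun _ b => b⟩

/-- The fully dishonest strategy profile: don't store, don't audit, always report ✓. -/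
def dishonest (N : ℕ) : ∀ i : Fin N, Strat N i :=
  fun _ => ⟨false, fun _ => false, fun _ _ => true⟩

/-- If `S_a > ((1 − p_a)/p_a)·R_a`, then in every pure Nash equilibrium
every non-storing SP receives no ✓ deterministic reports: for all distinct `i, j` with
`s_j = 0` we have `r_i^j = 0`; consequently a non-storing SP has `0` ✓ reports and does
not receive the storage reward `R_s` (its storage-reward indicator is `0`). -/
theorem nash_nonstoring_gets_no_check_reports
    (N : ℕ) (hN : 3 ≤ N) (Rs Ra cs ca Sa pa ε : ℝ)
    (hRs : 0 < Rs) (hRa : 0 < Ra) (hcs : 0 < cs) (hca : 0 < ca) (hSa : 0 ≤ Sa)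
    (hpa0 : 0 < pa) (hpa1 : pa ≤ 1) (hε0 : 0 < ε) (hε1 : ε < 1)
    (hS : ((1 - pa) / pa) * Ra < Sa) :
    ∀ σ : ∀ i : Fin N, Strat N i, IsNashEq Rs Ra cs ca Sa pa ε σ →
      ∀ j : Fin N, (σ j).s = false →
        (∀ (i : Fin N) (h : j ≠ i), report σ i ⟨j, h⟩ = false) ∧
        trueReports σ j = 0 ∧
        (if (N : ℝ) / 2 < (trueReports σ j : ℝ) then (1 : ℝ) else 0) = 0 := by
  intro σ hNash j hsj
  have hF : (1 - pa) * Ra - pa * Sa < 0 := by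
    have h1 : ((1 - pa) / pa) * Ra * pa < Sa * pa := by
      exact mul_lt_mul_of_pos_right hS hpa0
    have h2 : ((1 - pa) / pa) * Ra * pa = (1 - pa) * Ra := by
      field_simp
    nlinarith
  have hrep : ∀ (i : Fin N) (h : j ≠ i), report σ i ⟨j, h⟩ = false := by
    intro i h
    by_contra hr
    have hr' : report σ i ⟨j, h⟩ = true := by simpa using hr
    set js : {k : Fin N // k ≠ i} := ⟨j, h⟩ with hjs
    have hρf : (σ i).ρ js false = true := by
      simpa [report, show (σ js.1).s = false from hsj] using hr'
    set τ : Strat N i :=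
      ⟨(σ i).s, (σ i).a,
        Function.update (σ i).ρ js (fun b => b && (σ i).ρ js b)⟩ with hτ
    set σ' := Function.update σ i τ with hσ'
    have hσ'i : σ' i = τ := Function.update_self i τ σ
    have hσ'k : ∀ k : Fin N, k ≠ i → σ' k = σ k := by
      intro k hk; exact Function.update_of_ne hk τ σ
    -- trueReports unchanged
    have hTR : trueReports σ' i = trueReports σ i := by
      unfold trueReports
      congr 1
      apply Finset.filter_congr
      intro k _
      have hk : k.1 ≠ i := k.2
      simp only [report, hσ'k k.1 hk, hσ'i, hτ]
    -- sum decomposition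
    have hmem : js ∈ (Finset.univ : Finset {k : Fin N // k ≠ i}) := Finset.mem_univ js
    have hsum_new :
        ∑ k : {k : Fin N // k ≠ i}, pairPayoff Ra ca Sa pa ε (σ' k.1).s ((σ' i).a k) ((σ' i).ρ k)
        = ∑ k ∈ Finset.univ.erase js,
            pairPayoff Ra ca Sa pa ε (σ' k.1).s ((σ' i).a k) ((σ' i).ρ k)
          + pairPayoff Ra ca Sa pa ε (σ' js.1).s ((σ' i).a js) ((σ' i).ρ js) :=
      (Finset.sum_erase_add _ _ hmem).symm
    have hsum_old :
        ∑ k : {k : Fin N // k ≠ i}, pairPayoff Ra ca Sa pa ε (σ k.1).s ((σ i).a k) ((σ i).ρ k)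
        = ∑ k ∈ Finset.univ.erase js,
            pairPayoff Ra ca Sa pa ε (σ k.1).s ((σ i).a k) ((σ i).ρ k)
          + pairPayoff Ra ca Sa pa ε (σ js.1).s ((σ i).a js) ((σ i).ρ js) :=
      (Finset.sum_erase_add _ _ hmem).symm
    have hsum_eq :
        ∑ k ∈ Finset.univ.erase js,
            pairPayoff Ra ca Sa pa ε (σ' k.1).s ((σ' i).a k) ((σ' i).ρ k)
        = ∑ k ∈ Finset.univ.erase js,
            pairPayoff Ra ca Sa pa ε (σ k.1).s ((σ i).a k) ((σ i).ρ k) := by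
      apply Finset.sum_congr rfl
      intro k hk
      have hkjs : k ≠ js := (Finset.mem_erase.mp hk).1
      have hks : (σ' k.1).s = (σ k.1).s := by
        rw [hσ'k k.1 k.2]
      rw [hks, hσ'i, hτ]
      simp [Function.update_of_ne hkjs]
    -- the key pair payoffs
    have hjss : (σ js.1).s = false := hsj
    have hσ'jss : (σ' js.1).s = false := by
      by_cases hji : j = i
      · exact absurd hji h
      · rw [show js.1 = j from rfl, hσ'k j hji]; exact hsj
    have hpair_old :
        pairPayoff Ra ca Sa pa ε (σ js.1).s ((σ i).a js) ((σ i).ρ js)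
        = (if (σ i).a js then ((1 - pa) * Ra - pa * Sa) - ca
           else ((1 - pa) * Ra - pa * Sa)) := by
      cases ha : (σ i).a js <;> simp [pairPayoff, hjss, hρf, b01]
    have hpair_new :
        pairPayoff Ra ca Sa pa ε (σ' js.1).s ((σ' i).a js) ((σ' i).ρ js)
        = (if (σ i).a js then -ca else 0) := by
      rw [hσ'i, hσ'jss, hτ]
      cases ha : (σ i).a js <;> simp [pairPayoff, b01, Function.update_self]
    -- utilities
    have hle := hNash i τ
    have hU' : U Rs Ra cs ca Sa pa ε σ' i
        = U Rs Ra cs ca Sa pa ε σ i - ((1 - pa) * Ra - pa * Sa) := by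
      unfold U
      rw [hTR, hsum_new, hsum_old, hsum_eq, hpair_old, hpair_new, hσ'i, hτ]
      cases ha : (σ i).a js <;> simp <;> ring
    rw [← hσ', hU'] at hle
    linarith
  refine ⟨hrep, ?_, ?_⟩
  · have : trueReports σ j = 0 := by
      unfold trueReports
      rw [Finset.card_eq_zero, Finset.filter_eq_empty_iff]
      intro k _
      simp [hrep k.1 (Ne.symm k.2)]
    exact this
  · have h0 : trueReports σ j = 0 := by
      unfold trueReports
      rw [Finset.card_eq_zero, Finset.filter_eq_empty_iff]
      intro k _
      simp [hrep k.1 (Ne.symm k.2)]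
    rw [h0]
    have hN0 : (0:ℝ) ≤ (N:ℝ)/2 := by positivity
    have : ¬ ((N : ℝ) / 2 < ((0 : ℕ) : ℝ)) := by
      push_neg
      simpa using hN0
    exact if_neg this
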